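/- Let θ ∈ (0, π/2) and x ≥ 0. For z > 1 define F(x,z) := (1/(2θ)) · ( ∫_{α=−arctan x}^{θ} ((x·z + cos α)/(z + sin α) − x)² dα + ∫_{α=arctan x}^{θ} ((x·z − cos α)/(z + sin α) − x)² dα ). Then lim_{z→∞} z² · F(x,z) = ( (x²+1)·θ − (x²−1)·sin θ · cos θ ) / (2θ). -/

import Mathlib

open Real Filter Set intervalIntegral
open Topology

/-- The conditional second moment of the one-step increment of the slope process in
the directional growth model. -/
noncomputable def growthSecondMoment (θ x z : ℝ) : ℝ :=
  (1 / (2 * θ)) *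
    ((∫ α in (-(Real.arctan x))..θ, ((x * z + Real.cos α) / (z + Real.sin α) - x) ^ 2) +
     (∫ α in (Real.arctan x)..θ, ((x * z - Real.cos α) / (z + Real.sin α) - x) ^ 2))


noncomputable def antiD (c t : ℝ) : ℝ :=
  (t + Real.sin t * Real.cos t)/2 + c * Real.sin t ^ 2 + c^2 * ((t - Real.sin t * Real.cos t)/2)

lemma antiD_hasDeriv (c t : ℝ) : HasDerivAt (antiD c) ((Real.cos t + c * Real.sin t)^2) t := by
  have h1 : HasDerivAt Real.sin (Real.cos t) t := Real.hasDerivAt_sin t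
  have h2 : HasDerivAt Real.cos (-Real.sin t) t := Real.hasDerivAt_cos t
  have h := ((((hasDerivAt_id t).add (h1.mul h2)).div_const 2).add
      ((h1.pow 2).const_mul c)).add
      ((((hasDerivAt_id t).sub (h1.mul h2)).div_const 2).const_mul (c^2))
  refine h.congr_deriv ?_
  have hpy := Real.sin_sq_add_cos_sq t
  simp only [Nat.cast_ofNat, Nat.reduceSub, pow_one]
  nlinarith [hpy]

lemma integral_antiD (c a b : ℝ) :
    ∫ α in a..b, (Real.cos α + c * Real.sin α)^2 = antiD c b - antiD c a := by
  apply intervalIntegral.integral_eq_sub_of_hasDerivAt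
  · intro t _; exact antiD_hasDeriv c t
  · apply Continuous.intervalIntegrable
    continuity


lemma ratio_tendsto (d : ℝ) : Tendsto (fun z : ℝ => z / (z + d)) atTop (𝓝 1) := by
  have h : Tendsto (fun z : ℝ => d / (z + d)) atTop (𝓝 0) :=
    Tendsto.div_atTop tendsto_const_nhds (tendsto_atTop_add_const_right atTop d tendsto_id)
  have h2 : Tendsto (fun z : ℝ => 1 - d / (z + d)) atTop (𝓝 1) := by
    simpa using tendsto_const_nhds.sub h
  refine h2.congr' ?_
  filter_upwards [eventually_gt_atTop (|d| + 1)] with z hz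
  have hz0 : z + d ≠ 0 := by
    have := abs_le.mp (le_refl |d|)
    nlinarith [neg_abs_le d, le_abs_self d]
  field_simp
  ring

lemma aux_tendsto (c s a b : ℝ) (hc : 0 ≤ c) (hs : |s| ≤ 1) :
    Tendsto (fun z : ℝ => ∫ α in a..b, z^2 * ((c*z + s*Real.cos α)/(z + Real.sin α) - c)^2)
      atTop (𝓝 (∫ α in a..b, (s*Real.cos α - c*Real.sin α)^2)) := by
  have hs' := abs_le.mp hs
  apply intervalIntegral.tendsto_integral_filter_of_dominated_convergence
    (fun _ => 4*(1+c)^2)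
  · filter_upwards [eventually_ge_atTop (2:ℝ)] with z hz
    apply Continuous.aestronglyMeasurable
    have hden : ∀ α : ℝ, z + Real.sin α ≠ 0 := fun α => by
      nlinarith [Real.neg_one_le_sin α]
    exact (continuous_const.mul ((((continuous_const.add
      (continuous_const.mul Real.continuous_cos)).div
      (continuous_const.add Real.continuous_sin) hden).sub continuous_const).pow 2))
  · filter_upwards [eventually_ge_atTop (2:ℝ)] with z hz
    refine Filter.Eventually.of_forall fun α => ?_
    intro _
    have hsin := Real.neg_one_le_sin α
    have hden : (1:ℝ) ≤ z + Real.sin α := by linarith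
    have hden0 : z + Real.sin α ≠ 0 := by linarith
    have key : z^2 * ((c*z + s*Real.cos α)/(z + Real.sin α) - c)^2
        = (z/(z+Real.sin α))^2 * (s*Real.cos α - c*Real.sin α)^2 := by
      field_simp; ring
    rw [key, Real.norm_eq_abs, abs_of_nonneg (by positivity)]
    have h2 : z/(z+Real.sin α) ≤ 2 := by
      rw [div_le_iff₀ (by linarith)]; linarith
    have h0 : 0 ≤ z/(z+Real.sin α) := by positivity
    have habs : |s*Real.cos α - c*Real.sin α| ≤ 1 + c := by
      calc |s*Real.cos α - c*Real.sin α| ≤ |s*Real.cos α| + |c*Real.sin α| := abs_sub _ _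
        _ ≤ 1 + c := by
          rw [abs_mul, abs_mul, abs_of_nonneg hc]
          have := Real.abs_cos_le_one α
          have := Real.abs_sin_le_one α
          have := abs_nonneg s
          nlinarith
    have hsq : (s*Real.cos α - c*Real.sin α)^2 ≤ (1 + c)^2 := by
      nlinarith [abs_nonneg (s*Real.cos α - c*Real.sin α), sq_abs (s*Real.cos α - c*Real.sin α)]
    have hz2 : (z/(z+Real.sin α))^2 ≤ 4 := by nlinarith
    exact mul_le_mul hz2 hsq (sq_nonneg _) (by norm_num)
  · apply Continuous.intervalIntegrable; continuity
  · refine Filter.Eventually.of_forall fun α => ?_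
    intro _
    have hlim : Tendsto (fun z : ℝ => (s*Real.cos α - c*Real.sin α)^2 * (z/(z+Real.sin α))^2)
        atTop (𝓝 ((s*Real.cos α - c*Real.sin α)^2)) := by
      have := ((ratio_tendsto (Real.sin α)).pow 2).const_mul ((s*Real.cos α - c*Real.sin α)^2)
      simpa using this
    refine hlim.congr' ?_
    filter_upwards [eventually_ge_atTop (2:ℝ)] with z hz
    have hsin := Real.neg_one_le_sin α
    have hden0 : z + Real.sin α ≠ 0 := by nlinarith
    field_simp; ring


theorem stmt_2 (θ x : ℝ) (hθ : θ ∈ Set.Ioo 0 (Real.pi / 2)) (hx : 0 ≤ x) :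
    Filter.Tendsto (fun z : ℝ => z ^ 2 * growthSecondMoment θ x z) Filter.atTop
      (nhds (((x ^ 2 + 1) * θ - (x ^ 2 - 1) * Real.sin θ * Real.cos θ) / (2 * θ))) := by
  obtain ⟨hθ0, hθ2⟩ := hθ
  set a := Real.arctan x with ha
  have h1 := aux_tendsto x 1 (-a) θ hx (by norm_num)
  have h2 := aux_tendsto x (-1) a θ hx (by norm_num)
  have hsum := (h1.add h2).const_mul (1/(2*θ))
  have hfun : (fun z : ℝ => (1/(2*θ)) *
      ((∫ α in (-a)..θ, z^2 * ((x*z + 1*Real.cos α)/(z + Real.sin α) - x)^2) +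
       (∫ α in a..θ, z^2 * ((x*z + (-1)*Real.cos α)/(z + Real.sin α) - x)^2)))
      = (fun z : ℝ => z ^ 2 * growthSecondMoment θ x z) := by
    funext z
    unfold growthSecondMoment
    rw [intervalIntegral.integral_const_mul, intervalIntegral.integral_const_mul]
    simp only [one_mul, neg_one_mul, ← sub_eq_add_neg]
    ring
  rw [hfun] at hsum
  convert hsum using 2
  have e1 : (∫ α in (-a)..θ, (1*Real.cos α - x*Real.sin α)^2)
      = antiD (-x) θ - antiD (-x) (-a) := by
    rw [← integral_antiD]
    apply intervalIntegral.integral_congr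
    intro t _; ring
  have e2 : (∫ α in a..θ, ((-1)*Real.cos α - x*Real.sin α)^2)
      = antiD x θ - antiD x a := by
    rw [← integral_antiD]
    apply intervalIntegral.integral_congr
    intro t _; ring
  rw [e1, e2]
  unfold antiD
  rw [Real.sin_neg, Real.cos_neg]
  have hθ' : θ ≠ 0 := ne_of_gt hθ0
  field_simp
  ring
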